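/- Let P ⊆ ℝ³ be a convex polyhedron with 0 in its interior and let q ∈ ∂P be a regular point, i.e. there exists x ∈ P with ⟪x, q⟫ > ‖q‖². Then there exist a unit vector v and ε > 0 such that q + t·v ∈ ∂P for all t ∈ [0, ε] and ⟪q, v⟫ > 0; that is, at every regular boundary point there is at least one direction of strict ascent of the radial distance function along ∂P. (Existence part of the paper's theorem on the extended gradient.) -/

import Mathlib

open scoped RealInnerProductSpace

open Set Filter

/-- Every frontier point of a polytope `convexHull ℝ S` lies in the convex hull of a
subset `A` of `S` whose convex hull is entirely contained in the frontier. -/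
lemma mem_face_of_mem_frontier {E : Type*} [NormedAddCommGroup E] [NormedSpace ℝ E]
    (S : Set E) (hSfin : S.Finite) (P : Set E) (hP : P = convexHull ℝ S)
    (h0 : (0 : E) ∈ interior P) {z : E} (hz : z ∈ frontier P) :
    ∃ A ∈ hSfin.toFinset.powerset, z ∈ convexHull ℝ (A : Set E) ∧
      convexHull ℝ (A : Set E) ⊆ frontier P := by
  classical
  have hconv : Convex ℝ P := hP ▸ convex_convexHull ℝ S
  have hclosed : IsClosed P := hP ▸ hSfin.isClosed_convexHull ℝ
  have hzP : z ∈ P := hclosed.frontier_subset hz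
  have hzint : z ∉ interior P := by
    rw [hclosed.frontier_eq] at hz; exact hz.2
  obtain ⟨f, hf⟩ := geometric_hahn_banach_open_point hconv.interior isOpen_interior hzint
  -- `f ≤ f z` on all of `P`
  have hle : ∀ y ∈ P, f y ≤ f z := by
    intro y hy
    have h01 : ∀ t : ℝ, t ∈ Set.Ioo (0 : ℝ) 1 → (1 - t) * f y ≤ f z := by
      intro t ht
      have hmem : (1 - t) • y + t • (0 : E) ∈ interior P :=
        hconv.combo_closure_interior_mem_interior (subset_closure hy) h0
          (by linarith [ht.2]) ht.1 (by ring)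
      have := hf _ hmem
      simpa [smul_eq_mul] using this.le
    have htend : Tendsto (fun t : ℝ => (1 - t) * f y) (nhdsWithin 0 (Set.Ioo 0 1))
        (nhds (f y)) := by
      have : Tendsto (fun t : ℝ => (1 - t) * f y) (nhds 0) (nhds ((1 - 0) * f y)) :=
        (Continuous.tendsto (by continuity) 0)
      simpa using this.mono_left nhdsWithin_le_nhds
    haveI : (nhdsWithin (0 : ℝ) (Set.Ioo 0 1)).NeBot :=
      left_nhdsWithin_Ioo_neBot (by norm_num)
    exact le_of_tendsto htend (Filter.eventually_of_mem self_mem_nhdsWithin h01)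
  -- representation of `z` as a convex combination of points of `S`
  have hzS : z ∈ convexHull ℝ S := hP ▸ hzP
  rw [hSfin.convexHull_eq] at hzS
  obtain ⟨w, hw₀, hw₁, hwz⟩ := hzS
  set c := f z with hc
  set T := hSfin.toFinset with hT
  have hST : ∀ y ∈ T, y ∈ S := fun y hy => hSfin.mem_toFinset.mp hy
  have hSP : S ⊆ P := hP ▸ subset_convexHull ℝ S
  have hfS : ∀ y ∈ T, f y ≤ c := fun y hy => hle y (hSP (hST y hy))
  have hzsum : ∑ y ∈ T, w y • y = z := by
    rw [← hwz, Finset.centerMass_eq_of_sum_1 _ _ hw₁]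
    rfl
  have hfz : ∑ y ∈ T, w y * f y = c := by
    rw [hc, ← hzsum, map_sum]
    simp [smul_eq_mul]
  have hzero : ∀ y ∈ T, w y * (c - f y) = 0 := by
    have hsum : ∑ y ∈ T, w y * (c - f y) = 0 := by
      have h1 : ∑ y ∈ T, w y * c = c := by rw [← Finset.sum_mul, hw₁, one_mul]
      have : ∑ y ∈ T, w y * (c - f y) = (∑ y ∈ T, w y * c) - ∑ y ∈ T, w y * f y := by
        rw [← Finset.sum_sub_distrib]; congr 1; ext y; ring
      rw [this, h1, hfz, sub_self]
    intro y hy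
    exact (Finset.sum_eq_zero_iff_of_nonneg fun i hi =>
      mul_nonneg (hw₀ i (hST i hi)) (sub_nonneg.2 (hfS i hi))).mp hsum y hy
  have hkey : ∀ y ∈ T, w y ≠ 0 → f y = c := by
    intro y hy hwne
    rcases mul_eq_zero.mp (hzero y hy) with h | h
    · exact absurd h hwne
    · linarith [sub_eq_zero.mp h]
  set A := T.filter (fun y => f y = c) with hA
  have hAT : A ⊆ T := Finset.filter_subset _ _
  refine ⟨A, Finset.mem_powerset.mpr hAT, ?_, ?_⟩
  · -- `z ∈ convexHull ℝ A`
    have hsumA : ∑ y ∈ A, w y = 1 := by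
      rw [hA, Finset.sum_filter_of_ne hkey, hw₁]
    have hAz : ∑ y ∈ A, w y • y = z := by
      rw [hA, Finset.sum_filter_of_ne, hzsum]
      intro y hy hne
      by_contra hfy
      exact hne (by simp [hkey, show w y = 0 from by_contra fun h => hfy (hkey y hy h)])
    have hmem := A.centerMass_mem_convexHull (w := w) (z := id)
      (fun i hi => hw₀ i (hST i (hAT hi))) (by rw [hsumA]; norm_num)
      (fun i hi => Finset.mem_coe.mpr hi)
    rwa [Finset.centerMass_eq_of_sum_1 _ _ hsumA, show (∑ y ∈ A, w y • id y) = z from hAz]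
      at hmem
  · -- `convexHull ℝ A ⊆ frontier P`
    have hsub : (A : Set E) ⊆ P ∩ {y | f y = c} := by
      intro y hy
      have hy' := Finset.mem_coe.mp hy
      exact ⟨hSP (hST y (hAT hy')), (Finset.mem_filter.mp hy').2⟩
    have hconv2 : Convex ℝ (P ∩ {y | f y = c}) :=
      hconv.inter (convex_hyperplane (f := fun y => f y) ⟨f.map_add, f.map_smul⟩ c)
    have hmin := convexHull_min hsub hconv2
    intro y hy
    obtain ⟨hyP, hyc⟩ := hmin hy
    rw [hclosed.frontier_eq]
    refine ⟨hyP, fun hint => ?_⟩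
    have := hf y hint
    rw [Set.mem_setOf_eq.mp hyc] at this
    exact lt_irrefl _ this

/-- at a regular boundary point `q` of a convex polyhedron `P` (with `0` in
its interior), there exists at least one boundary-tangent direction of strict ascent of
the radial distance function. -/
theorem exists_ascent_direction_at_regular_point
    (S : Set (EuclideanSpace ℝ (Fin 3))) (hSfin : S.Finite)
    (P : Set (EuclideanSpace ℝ (Fin 3))) (hP : P = convexHull ℝ S)
    (h0 : (0 : EuclideanSpace ℝ (Fin 3)) ∈ interior P)
    (q : EuclideanSpace ℝ (Fin 3)) (hq : q ∈ frontier P)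
    (hreg : ∃ x ∈ P, ‖q‖ ^ 2 < ⟪x, q⟫) :
    ∃ v : EuclideanSpace ℝ (Fin 3), ‖v‖ = 1 ∧
      (∃ ε > (0 : ℝ), ∀ t ∈ Set.Icc (0 : ℝ) ε, q + t • v ∈ frontier P) ∧
      0 < ⟪q, v⟫ := by
  classical
  obtain ⟨x, hxP, hxq⟩ := hreg
  have hconv : Convex ℝ P := hP ▸ convex_convexHull ℝ S
  have hclosed : IsClosed P := hP ▸ hSfin.isClosed_convexHull ℝ
  have hcompact : IsCompact P := hP ▸ hSfin.isCompact_convexHull ℝ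
  have hP0 : P ∈ nhds (0 : EuclideanSpace ℝ (Fin 3)) := mem_interior_iff_mem_nhds.mp h0
  have habs : Absorbent ℝ P := absorbent_nhds_zero hP0
  have hbdd : Bornology.IsVonNBounded ℝ P := hcompact.totallyBounded.isVonNBounded ℝ
  have hqP : q ∈ P := hclosed.frontier_subset hq
  have hqint : q ∉ interior P := by rw [hclosed.frontier_eq] at hq; exact hq.2
  have hq0 : q ≠ 0 := fun h => hqint (h ▸ h0)
  set u : EuclideanSpace ℝ (Fin 3) := x - q with hu
  have hqu : 0 < ⟪q, u⟫ := by
    have : ⟪q, u⟫ = ⟪x, q⟫ - ‖q‖ ^ 2 := by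
      rw [hu, inner_sub_right, real_inner_comm q x, real_inner_self_eq_norm_sq]
    rw [this]; linarith
  have hu0 : u ≠ 0 := by
    intro h; rw [h, inner_zero_right] at hqu; exact lt_irrefl _ hqu
  -- the approximating sequence
  set δ : ℝ := min (‖q‖ / (2 * ‖u‖)) 1 with hδ
  have hδpos : 0 < δ := by
    have h1 : 0 < ‖q‖ := norm_pos_iff.mpr hq0
    have h2 : 0 < ‖u‖ := norm_pos_iff.mpr hu0
    apply lt_min _ one_pos
    positivity
  have hδ1 : δ ≤ 1 := min_le_right _ _
  set s : ℕ → ℝ := fun n => δ / (n + 1) with hs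
  have hspos : ∀ n, 0 < s n := fun n => by positivity
  have hsleδ : ∀ n, s n ≤ δ := fun n => by
    rw [hs]
    apply div_le_self hδpos.le
    exact_mod_cast le_add_of_nonneg_left (Nat.cast_nonneg n)
  have hs1 : ∀ n, s n ≤ 1 := fun n => (hsleδ n).trans hδ1
  set y : ℕ → EuclideanSpace ℝ (Fin 3) := fun n => q + s n • u with hy
  have hyP : ∀ n, y n ∈ P := by
    intro n
    have : y n = (1 - s n) • q + s n • x := by
      rw [hy]; simp only [hu]; module
    rw [this]
    exact hconv hqP hxP (by linarith [hs1 n]) (hspos n).le (by ring)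
  have hyne : ∀ n, y n ≠ 0 := by
    intro n hcon
    have h1 : ‖s n • u‖ < ‖q‖ := by
      rw [norm_smul, Real.norm_eq_abs, abs_of_pos (hspos n)]
      have h2 : s n ≤ ‖q‖ / (2 * ‖u‖) := (hsleδ n).trans (min_le_left _ _)
      have hunorm : 0 < ‖u‖ := norm_pos_iff.mpr hu0
      calc s n * ‖u‖ ≤ ‖q‖ / (2 * ‖u‖) * ‖u‖ := by
            apply mul_le_mul_of_nonneg_right h2 hunorm.le
        _ = ‖q‖ / 2 := by field_simp
        _ < ‖q‖ := by
            have : 0 < ‖q‖ := norm_pos_iff.mpr hq0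
            linarith
    have : q = -(s n • u) := by
      have := hcon
      rw [hy] at this
      linear_combination (norm := module) this
    rw [this, norm_neg] at h1
    exact lt_irrefl _ h1
  set g : ℕ → ℝ := fun n => gauge P (y n) with hg
  have hgpos : ∀ n, 0 < g n := fun n => (gauge_pos habs hbdd).mpr (hyne n)
  have hgle : ∀ n, g n ≤ 1 := fun n => gauge_le_one_of_mem (hyP n)
  set z : ℕ → EuclideanSpace ℝ (Fin 3) := fun n => (g n)⁻¹ • y n with hz
  have hzfr : ∀ n, z n ∈ frontier P := by
    intro n
    rw [← gauge_eq_one_iff_mem_frontier hconv hP0]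
    rw [hz]
    rw [gauge_smul_of_nonneg (inv_nonneg.mpr (hgpos n).le)]
    simp only [smul_eq_mul]
    exact inv_mul_cancel₀ (hgpos n).ne'
  have hzinner : ∀ n, 0 < ⟪q, z n - q⟫ := by
    intro n
    have hinner : ⟪q, z n - q⟫ = (g n)⁻¹ * (‖q‖ ^ 2 + s n * ⟪q, u⟫) - ‖q‖ ^ 2 := by
      rw [hz, inner_sub_right, inner_smul_right, hy, inner_add_right, inner_smul_right,
        real_inner_self_eq_norm_sq]
    rw [hinner]
    have h1 : 0 ≤ ‖q‖ ^ 2 := sq_nonneg _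
    have h2 : 0 < s n * ⟪q, u⟫ := mul_pos (hspos n) hqu
    have h3 : 1 ≤ (g n)⁻¹ := (one_le_inv₀ (hgpos n)).mpr (hgle n)
    nlinarith
  -- pigeonhole on faces
  have hface : ∀ n, ∃ A ∈ hSfin.toFinset.powerset,
      z n ∈ convexHull ℝ (↑A : Set (EuclideanSpace ℝ (Fin 3))) ∧
      convexHull ℝ (↑A : Set (EuclideanSpace ℝ (Fin 3))) ⊆ frontier P := fun n =>
    mem_face_of_mem_frontier S hSfin P hP h0 (hzfr n)
  choose A hApow hAz hAfr using hface
  set F : ℕ → {B // B ∈ hSfin.toFinset.powerset} := fun n => ⟨A n, hApow n⟩ with hF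
  obtain ⟨B, hB⟩ := Finite.exists_infinite_fiber F
  rw [Set.infinite_coe_iff] at hB
  set K := convexHull ℝ (↑(B.1) : Set (EuclideanSpace ℝ (Fin 3))) with hK
  have hKfr : K ⊆ frontier P := by
    obtain ⟨n, hn⟩ := hB.nonempty
    have : A n = B.1 := congrArg Subtype.val hn
    rw [hK, ← this]; exact hAfr n
  have hKclosed : IsClosed K := B.1.finite_toSet.isClosed_convexHull ℝ
  have hzK : ∀ n ∈ (F ⁻¹' {B} : Set ℕ), z n ∈ K := by
    intro n hn
    have : A n = B.1 := congrArg Subtype.val hn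
    rw [hK, ← this]; exact hAz n
  -- z n → q
  have hytend : Tendsto y atTop (nhds q) := by
    have hstend : Tendsto s atTop (nhds 0) := by
      rw [hs]
      have := tendsto_one_div_add_atTop_nhds_zero_nat (𝕜 := ℝ)
      have h2 : Tendsto (fun n : ℕ => δ * (1 / (n + 1))) atTop (nhds (δ * 0)) :=
        this.const_mul δ
      simpa [div_eq_mul_inv, mul_comm] using h2
    have : Tendsto (fun n => q + s n • u) atTop (nhds (q + (0 : ℝ) • u)) :=
      (tendsto_const_nhds.add (hstend.smul_const u))
    simpa using this
  have hgtend : Tendsto g atTop (nhds 1) := by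
    have hcont : Continuous (gauge P) := continuous_gauge hconv hP0
    have := (hcont.tendsto q).comp hytend
    rwa [show gauge P q = 1 from (gauge_eq_one_iff_mem_frontier hconv hP0).mpr hq] at this
  have hztend : Tendsto z atTop (nhds q) := by
    have h1 : Tendsto (fun n => (g n)⁻¹) atTop (nhds 1) := by
      have := hgtend.inv₀ one_ne_zero
      simpa using this
    have := h1.smul hytend
    simpa using this
  have hqK : q ∈ K := by
    rw [← hKclosed.closure_eq]
    rw [mem_closure_iff_nhds]
    intro U hU
    obtain ⟨N, hN⟩ := (Filter.tendsto_atTop'.mp hztend) U hU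
    obtain ⟨n, hnB, hnN⟩ := hB.exists_gt N
    exact ⟨z n, hN n hnN.le, hzK n hnB⟩
  -- construct the final direction
  obtain ⟨n₀, hn₀⟩ := hB.nonempty
  obtain ⟨z₀, hz₀K, hz₀in⟩ : ∃ w, w ∈ K ∧ 0 < ⟪q, w - q⟫ :=
    ⟨z n₀, hzK n₀ hn₀, hzinner n₀⟩
  have hz₀ne : z₀ - q ≠ 0 := by
    intro h; rw [h, inner_zero_right] at hz₀in; exact lt_irrefl _ hz₀in
  set ε : ℝ := ‖z₀ - q‖ with hε
  have hεpos : 0 < ε := norm_pos_iff.mpr hz₀ne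
  refine ⟨ε⁻¹ • (z₀ - q), ?_, ⟨ε, hεpos, ?_⟩, ?_⟩
  · rw [norm_smul, Real.norm_eq_abs, abs_of_pos (inv_pos.mpr hεpos), ← hε,
      inv_mul_cancel₀ hεpos.ne']
  · intro t ht
    have hmem : q + t • ε⁻¹ • (z₀ - q) ∈ K := by
      have heq : q + t • ε⁻¹ • (z₀ - q) = (1 - t / ε) • q + (t / ε) • z₀ := by
        match_scalars <;> field_simp <;> ring
      rw [heq]
      have h1 : 0 ≤ t / ε := div_nonneg ht.1 hεpos.le
      have h2 : t / ε ≤ 1 := (div_le_one hεpos).mpr ht.2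
      exact (convex_convexHull ℝ _) hqK hz₀K (by linarith) h1 (by ring)
    exact hKfr hmem
  · rw [inner_smul_right]
    exact mul_pos (inv_pos.mpr hεpos) hz₀in
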